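/- Let k be an algebraically closed field of characteristic zero, B a finitely generated k-algebra that is an integral domain, and f ∈ B[x] a monic polynomial. Let R be an integral domain that is a finitely generated B[x]_f-algebra containing B[x]_f, and let h ∈ R be nonzero. Then there exists a nonzero a ∈ B such that for every k-algebra homomorphism c : B → k with c(a) ≠ 0, the image h ⊗ 1 of h in R ⊗_{B[x]_f} k(x) is nonzero, where the tensor product is formed along the extension of c to B[x]_f → k(x) determined by c(x) = x. -/

import Mathlib

open Polynomial
open scoped TensorProduct

universe u v



lemma pseudo_div {A : Type*} [CommRing A] [IsDomain A] (I : Ideal (Polynomial A)) (m : A[X])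
    (hmI : m ∈ I) (hm : m ≠ 0) (hmin : ∀ q ∈ I, q ≠ 0 → m.natDegree ≤ q.natDegree) :
    ∀ q ∈ I, ∃ (e : ℕ) (r : A[X]), (Polynomial.C m.leadingCoeff) ^ e * q = m * r := by
  intro q hq
  by_cases hq0 : q = 0
  · exact ⟨0, 0, by simp [hq0]⟩
  generalize hn : q.natDegree = n
  induction n using Nat.strong_induction_on generalizing q with
  | _ n ih =>
    have hdle : m.natDegree ≤ q.natDegree := hmin q hq hq0
    set d := m.natDegree
    -- the cancellation step
    set q' : A[X] := C m.leadingCoeff * q - C q.leadingCoeff * X ^ (q.natDegree - d) * m with hq'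
    have hq'I : q' ∈ I := by
      apply Ideal.sub_mem
      · exact Ideal.mul_mem_left _ _ hq
      · exact Ideal.mul_mem_left _ _ hmI
    have hlc : m.leadingCoeff ≠ 0 := leadingCoeff_ne_zero.2 hm
    have hqlc : q.leadingCoeff ≠ 0 := leadingCoeff_ne_zero.2 hq0
    have hdeg1 : (C m.leadingCoeff * q).degree = q.degree := by
      rw [degree_C_mul hlc]
    have hdeg2 : (C q.leadingCoeff * X ^ (q.natDegree - d) * m).degree = q.degree := by
      rw [degree_mul, degree_mul, degree_C hqlc, degree_X_pow, degree_eq_natDegree hm,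
        degree_eq_natDegree hq0]
      rw [zero_add]
      norm_cast
      omega
    have hdlt : q'.degree < q.degree := by
      rw [hq']
      rw [← hdeg1]
      apply degree_sub_lt (hdeg1.trans hdeg2.symm)
      · exact mul_ne_zero (by simpa using hlc) hq0
      · rw [leadingCoeff_mul, leadingCoeff_mul, leadingCoeff_mul, leadingCoeff_C,
          leadingCoeff_C, leadingCoeff_X_pow, mul_one, mul_comm]
    by_cases hq'0 : q' = 0
    · -- C lc * q = C qlc * X^(n-d) * m
      refine ⟨1, C q.leadingCoeff * X ^ (q.natDegree - d), ?_⟩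
      have := sub_eq_zero.1 (hq' ▸ hq'0)
      rw [pow_one, this]; ring
    · have hq'deg : q'.natDegree < n := by
        have := natDegree_lt_natDegree hq'0 hdlt
        omega
      obtain ⟨e, r, hr⟩ := ih q'.natDegree (by omega) q' hq'I hq'0 rfl
      refine ⟨e + 1, r + (C m.leadingCoeff) ^ e * (C q.leadingCoeff * X ^ (q.natDegree - d)), ?_⟩
      have : (C m.leadingCoeff) ^ e * (C m.leadingCoeff * q) =
          (C m.leadingCoeff) ^ e * (q' + C q.leadingCoeff * X ^ (q.natDegree - d) * m) := by
        rw [hq']; ring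
      calc (C m.leadingCoeff) ^ (e+1) * q = (C m.leadingCoeff) ^ e * (C m.leadingCoeff * q) := by
            ring
        _ = (C m.leadingCoeff) ^ e * q' + (C m.leadingCoeff) ^ e *
              (C q.leadingCoeff * X ^ (q.natDegree - d) * m) := by rw [this]; ring
        _ = m * (r + (C m.leadingCoeff) ^ e * (C q.leadingCoeff * X ^ (q.natDegree - d))) := by
            rw [hr]; ring


noncomputable def psi {R : Type*} [CommRing R] [IsDomain R] (A : Subring R) :
    FractionRing ↥A →+* FractionRing R :=
  IsFractionRing.lift (g := (algebraMap R (FractionRing R)).comp A.subtype)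
    ((IsFractionRing.injective R (FractionRing R)).comp Subtype.coe_injective)

lemma psi_comp {R : Type*} [CommRing R] [IsDomain R] (A : Subring R) :
    (psi A).comp (algebraMap ↥A (FractionRing ↥A)) =
      (algebraMap R (FractionRing R)).comp A.subtype := by
  ext a
  show psi A (algebraMap ↥A (FractionRing ↥A) a) = _
  unfold psi
  rw [IsFractionRing.lift_algebraMap]

set_option maxHeartbeats 2000000 in
set_option synthInstance.maxHeartbeats 400000 in
lemma exists_dvd_const {R : Type*} [CommRing R] [IsDomain R] (A : Subring R) (t : R) (h : R)
    (hh : h ≠ 0) (m : Polynomial ↥A) (hm0 : m ≠ 0) (hmker : Polynomial.aeval t m = 0)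
    (hmem : ∃ p : Polynomial ↥A, Polynomial.aeval t p = h) :
    ∃ (b : ↥A) (r : R), b ≠ 0 ∧ h * r = (b : R) := by
  classical
  let FR := FractionRing R
  let ι : R →+* FR := algebraMap R FR
  have hιinj : Function.Injective ι := IsFractionRing.injective R FR
  let K := FractionRing ↥A
  letI : Algebra K FR := (psi A).toAlgebra
  have hψalg : algebraMap K FR = psi A := rfl
  have halgKinj : Function.Injective (algebraMap ↥A K) := IsFractionRing.injective ↥A K
  -- commutation
  have CM : ∀ (x : R) (p : Polynomial ↥A),
      Polynomial.aeval (ι x) (p.map (algebraMap ↥A K)) = ι (Polynomial.aeval x p) := by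
    intro x p
    rw [Polynomial.aeval_def, hψalg, Polynomial.eval₂_map, psi_comp,
      Polynomial.aeval_def, Polynomial.hom_eval₂]
    rfl
  have Hne : ι h ≠ 0 := fun e => hh (hιinj (by rw [e, map_zero]))
  have halg : IsIntegral K (ι t) := by
    rw [← isAlgebraic_iff_isIntegral]
    refine ⟨m.map (algebraMap ↥A K), ?_, ?_⟩
    · exact (Polynomial.map_ne_zero_iff halgKinj).2 hm0
    · rw [CM, hmker, map_zero]
  have Hmem : ι h ∈ Algebra.adjoin K {ι t} := by
    obtain ⟨p, hp⟩ := hmem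
    rw [Algebra.adjoin_singleton_eq_range_aeval]
    refine ⟨p.map (algebraMap ↥A K), ?_⟩
    show Polynomial.aeval (ι t) (p.map (algebraMap ↥A K)) = ι h
    rw [CM, hp]
  have Hint : IsIntegral K (ι h) := IsIntegral.of_mem_of_fg _ halg.fg_adjoin_singleton _ Hmem
  have hc0 : (minpoly K (ι h)).coeff 0 ≠ 0 := minpoly.coeff_zero_ne_zero Hint Hne
  set N := IsLocalization.integerNormalization (nonZeroDivisors ↥A) (minpoly K (ι h)) with hNdef
  obtain ⟨b0, hb0m, hb0e⟩ := IsLocalization.integerNormalization_spec (nonZeroDivisors ↥A)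
    (minpoly K (ι h))
  have hb0 : ∀ i, algebraMap ↥A K (N.coeff i) = b0 • (minpoly K (ι h)).coeff i := fun i => by
    rw [← Polynomial.coeff_map, hb0e, Polynomial.coeff_smul]
  have hb0ne : (algebraMap ↥A K) (b0 : ↥A) ≠ 0 := fun e =>
    nonZeroDivisors.ne_zero hb0m (halgKinj (by rw [e, map_zero]))
  have hmaeval : Polynomial.eval₂ (psi A) (ι h) (minpoly K (ι h)) = 0 := by
    have := minpoly.aeval K (ι h)
    rwa [Polynomial.aeval_def, hψalg] at this
  have hNaevalFR := IsLocalization.integerNormalization_eval₂_eq_zero (nonZeroDivisors ↥A)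
    (psi A) (minpoly K (ι h)) hmaeval
  have hNaeval : Polynomial.aeval h N = 0 := by
    apply hιinj
    rw [map_zero]
    have h6 : ι (Polynomial.aeval h N) = Polynomial.eval₂ ((psi A).comp (algebraMap ↥A K)) (ι h) N := by
      rw [psi_comp, Polynomial.aeval_def, Polynomial.hom_eval₂]
      rfl
    rw [h6, hNaevalFR]
  have hN0 : N.coeff 0 ≠ 0 := by
    intro e
    have h3 := hb0 0
    rw [e, map_zero] at h3
    have h4 : ((b0 : ↥A) • (minpoly K (ι h)).coeff 0 : K) =
        (algebraMap ↥A K) (b0 : ↥A) * (minpoly K (ι h)).coeff 0 := Algebra.smul_def _ _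
    rw [h4] at h3
    exact (mul_ne_zero hb0ne hc0) h3.symm
  refine ⟨N.coeff 0, -Polynomial.aeval h N.divX, hN0, ?_⟩
  have h4 := congrArg (Polynomial.aeval h) (Polynomial.X_mul_divX_add N)
  rw [hNaeval, map_add, map_mul, Polynomial.aeval_X, Polynomial.aeval_C] at h4
  have h5 : (algebraMap ↥A R) (N.coeff 0) = (N.coeff 0 : R) := rfl
  rw [h5] at h4
  rw [mul_neg]
  linear_combination -h4


noncomputable def liftOfSurj {S R L : Type*} [CommRing S] [CommRing R] [CommRing L]
    (π : S →+* R) (hsurj : Function.Surjective π) (θ : S →+* L)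
    (hker : ∀ x, π x = 0 → θ x = 0) : R →+* L :=
  (Ideal.Quotient.lift (RingHom.ker π) θ (fun x hx => hker x hx)).comp
    ((RingHom.quotientKerEquivOfSurjective hsurj).symm : R ≃+* S ⧸ RingHom.ker π).toRingHom

lemma liftOfSurj_comp {S R L : Type*} [CommRing S] [CommRing R] [CommRing L]
    (π : S →+* R) (hsurj : Function.Surjective π) (θ : S →+* L)
    (hker : ∀ x, π x = 0 → θ x = 0) (x : S) : liftOfSurj π hsurj θ hker (π x) = θ x := by
  have h1 : (RingHom.quotientKerEquivOfSurjective hsurj) (Ideal.Quotient.mk (RingHom.ker π) x)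
      = π x := by
    exact RingHom.quotientKerEquivOfSurjective_apply_mk hsurj x
  have h2 : ((RingHom.quotientKerEquivOfSurjective hsurj).symm (π x)) =
      Ideal.Quotient.mk (RingHom.ker π) x := by
    rw [← h1, RingEquiv.symm_apply_apply]
  simp [liftOfSurj, h2]

section Step
variable {R : Type*} [CommRing R] [IsDomain R] (L : Type*) [Field L] [IsAlgClosed L]

lemma step (A : Subring R) (t : R)
    (htop : Algebra.adjoin (↥A) ({t} : Set R) = ⊤) (h : R) (hh : h ≠ 0) :
    ∃ a : ↥A, a ≠ 0 ∧ ∀ σ : ↥A →+* L, σ a ≠ 0 →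
      ∃ φ : R →+* L, φ.comp A.subtype = σ ∧ φ h ≠ 0 := by
  classical
  set π : Polynomial ↥A →+* R := (Polynomial.aeval t).toRingHom with hπdef
  have hπC : ∀ a : ↥A, π (C a) = (a : R) := by intro a; simp [hπdef]; rfl
  have hπsurj : Function.Surjective π := by
    intro r
    have : r ∈ Algebra.adjoin (↥A) ({t} : Set R) := htop ▸ trivial
    rw [Algebra.adjoin_singleton_eq_range_aeval] at this
    obtain ⟨p, hp⟩ := this
    exact ⟨p, hp⟩
  obtain ⟨qh, hqh⟩ := hπsurj h
  by_cases hcase : ∃ m, m ∈ RingHom.ker π ∧ m ≠ 0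
  · -- algebraic case
    obtain ⟨m0, hm0mem, hm0ne⟩ := hcase
    have hex : ∃ n, ∃ p, p ∈ RingHom.ker π ∧ p ≠ 0 ∧ p.natDegree = n :=
      ⟨_, m0, hm0mem, hm0ne, rfl⟩
    obtain ⟨m, hmmem, hmne, hmdeg⟩ := Nat.find_spec hex
    have hmin : ∀ q ∈ RingHom.ker π, q ≠ 0 → m.natDegree ≤ q.natDegree := by
      intro q hq hq0
      rw [hmdeg]
      exact Nat.find_min' hex ⟨q, hq, hq0, rfl⟩
    have hd1 : 1 ≤ m.natDegree := by
      by_contra hd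
      push_neg at hd
      have hC0 : m = C (m.coeff 0) := Polynomial.eq_C_of_natDegree_eq_zero (by omega)
      apply hmne
      have hπm : π m = 0 := RingHom.mem_ker.1 hmmem
      rw [hC0, hπC] at hπm
      have : m.coeff 0 = 0 := Subtype.coe_injective (by simpa using hπm)
      rw [hC0, this, map_zero]
    have hmker' : Polynomial.aeval t m = 0 := RingHom.mem_ker.1 hmmem
    obtain ⟨b, r, hbne, hbr⟩ := exists_dvd_const A t h hh m hmne hmker' ⟨qh, hqh⟩
    refine ⟨m.leadingCoeff * b, mul_ne_zero (leadingCoeff_ne_zero.2 hmne) hbne, fun σ hσ => ?_⟩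
    have hσlc : σ m.leadingCoeff ≠ 0 := fun e => hσ (by rw [map_mul, e, zero_mul])
    have hσb : σ b ≠ 0 := fun e => hσ (by rw [map_mul, e, mul_zero])
    have hdeg : (m.map σ).degree ≠ 0 := by
      rw [Polynomial.degree_map_eq_of_leadingCoeff_ne_zero σ hσlc,
        Polynomial.degree_eq_natDegree hmne]
      intro e
      have : m.natDegree = 0 := by exact_mod_cast e
      omega
    obtain ⟨lam, hlam⟩ := IsAlgClosed.exists_root (m.map σ) hdeg
    set θ : Polynomial ↥A →+* L := eval₂RingHom σ lam with hθdef
    have hθm : θ m = 0 := by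
      rw [hθdef]
      simpa [Polynomial.eval₂_eq_eval_map] using hlam
    have hker : ∀ x, π x = 0 → θ x = 0 := by
      intro x hx
      obtain ⟨e, r', hr'⟩ := pseudo_div (RingHom.ker π) m hmmem hmne hmin x
        (RingHom.mem_ker.2 hx)
      have h7 := congrArg θ hr'
      rw [map_mul, map_mul, map_pow, hθm, zero_mul] at h7
      have hC : θ (C m.leadingCoeff) = σ m.leadingCoeff := by simp [hθdef]
      rw [hC] at h7
      exact (mul_eq_zero.1 h7).resolve_left (pow_ne_zero e hσlc)
    refine ⟨liftOfSurj π hπsurj θ hker, ?_, ?_⟩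
    · ext a
      simp only [RingHom.comp_apply, Subring.subtype_apply]
      rw [← hπC a, liftOfSurj_comp]
      simp [hθdef]
    · intro e
      have h1 : liftOfSurj π hπsurj θ hker ((b : R)) = σ b := by
        rw [← hπC b, liftOfSurj_comp]
        simp [hθdef]
      have h2 : liftOfSurj π hπsurj θ hker (h * r) = 0 := by rw [map_mul, e, zero_mul]
      rw [hbr, h1] at h2
      exact hσb h2
  · -- transcendental case
    push_neg at hcase
    have hqh0 : qh ≠ 0 := fun e => hh (by rw [← hqh, e, map_zero])
    refine ⟨qh.leadingCoeff, leadingCoeff_ne_zero.2 hqh0, fun σ hσ => ?_⟩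
    have hmapne : qh.map σ ≠ 0 := fun e => hσ (by
      have := congrArg (fun p => Polynomial.coeff p qh.natDegree) e
      simpa [coeff_map] using this)
    obtain ⟨lam, hlam⟩ := (qh.map σ).exists_eval_ne_zero_of_natDegree_lt_card hmapne
      (lt_of_lt_of_le (Cardinal.nat_lt_aleph0 _) (Cardinal.aleph0_le_mk L))
    set θ : Polynomial ↥A →+* L := eval₂RingHom σ lam with hθdef
    have hker : ∀ x, π x = 0 → θ x = 0 := by
      intro x hx
      have : x = 0 := hcase x (by simpa [RingHom.mem_ker] using hx)
      simp [this]
    refine ⟨liftOfSurj π hπsurj θ hker, ?_, ?_⟩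
    · ext a
      simp only [RingHom.comp_apply, Subring.subtype_apply]
      rw [← hπC a, liftOfSurj_comp]
      simp [hθdef]
    · rw [← hqh, liftOfSurj_comp]
      simpa [hθdef, eval₂_eq_eval_map] using hlam
end Step



lemma main (L : Type v) [Field L] [IsAlgClosed L] : ∀ (n : ℕ) (R : Type u) (_ : CommRing R)
    (_ : IsDomain R) (A : Subring R) (s : Finset R), s.card ≤ n →
    Subring.closure ((A : Set R) ∪ (s : Set R)) = ⊤ → ∀ h : R, h ≠ 0 →
    ∃ a : ↥A, a ≠ 0 ∧ ∀ σ : ↥A →+* L, σ a ≠ 0 →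
      ∃ φ : R →+* L, φ.comp A.subtype = σ ∧ φ h ≠ 0 := by
  intro n
  induction n with
  | zero =>
    intro R _ _ A s hcard hclo h hh
    have hs : s = ∅ := Finset.card_eq_zero.1 (by omega)
    subst hs
    rw [Finset.coe_empty, Set.union_empty, Subring.closure_eq] at hclo
    subst hclo
    refine ⟨⟨h, trivial⟩, fun e => hh (congrArg Subtype.val e), fun σ hσ => ?_⟩
    refine ⟨σ.comp (Subring.topEquiv.symm : R ≃+* (⊤ : Subring R)).toRingHom, ?_, hσ⟩
    ext x
    rfl
  | succ n IH =>
    intro R _ _ A s hcard hclo h hh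
    classical
    rcases s.eq_empty_or_nonempty with hs | ⟨t, ht⟩
    · exact IH R ‹_› ‹_› A s (by subst hs; simp) hclo h hh
    set s' := s.erase t with hs'def
    have hins : insert t s' = s := Finset.insert_erase ht
    have hpos : 0 < s.card := Finset.card_pos.2 ⟨t, ht⟩
    have hcard' : s'.card ≤ n := by
      have h0 : s'.card = s.card - 1 := by rw [hs'def]; exact Finset.card_erase_of_mem ht
      omega
    set A' : Subring R := (Algebra.adjoin (↥A) (s' : Set R)).toSubring with hA'def
    have hAleA' : (A : Set R) ⊆ (A' : Set R) := by
      intro x hx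
      have : (algebraMap ↥A R) ⟨x, hx⟩ ∈ Algebra.adjoin (↥A) (s' : Set R) :=
        Subalgebra.algebraMap_mem _ _
      exact this
    have hs'leA' : (s' : Set R) ⊆ (A' : Set R) := fun x hx => Algebra.subset_adjoin hx
    -- A' = closure (A ∪ s')
    have hA'eq : (A' : Set R) = (Subring.closure ((A : Set R) ∪ (s' : Set R)) : Set R) := by
      apply subset_antisymm
      · intro x hx
        let S' : Subalgebra ↥A R :=
          { (Subring.closure ((A : Set R) ∪ (s' : Set R))).toSubsemiring with
            algebraMap_mem' := fun a => Subring.subset_closure (Or.inl a.2) }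
        have hle : Algebra.adjoin (↥A) (s' : Set R) ≤ S' :=
          Algebra.adjoin_le (fun y hy => Subring.subset_closure (Or.inr hy))
        exact hle hx
      · exact Subring.closure_le.2 (Set.union_subset hAleA' hs'leA')
    -- step hypothesis : adjoin A' {t} = ⊤
    have hadj : Algebra.adjoin (↥A') ({t} : Set R) = ⊤ := by
      rw [← Subalgebra.toSubring_injective.eq_iff]
      refine (Subring.eq_top_iff' _).2 ?_
      intro x
      have hx : x ∈ Subring.closure ((A : Set R) ∪ (s : Set R)) := hclo ▸ trivial
      have hsub : (A : Set R) ∪ (s : Set R) ⊆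
          ((Algebra.adjoin (↥A') ({t} : Set R)).toSubring : Set R) := by
        rintro y (hy | hy)
        · exact Subalgebra.algebraMap_mem _ (⟨y, hAleA' hy⟩ : ↥A')
        · rw [← hins] at hy
          rcases Finset.mem_insert.1 hy with hy | hy
          · subst hy; exact Algebra.subset_adjoin rfl
          · exact Subalgebra.algebraMap_mem _ (⟨y, hs'leA' hy⟩ : ↥A')
      exact Subring.closure_le.2 hsub hx
    obtain ⟨a', ha'ne, hstep⟩ := step L A' t hadj h hh
    -- set up IH data
    set A₂ : Subring ↥A' := A.comap A'.subtype with hA₂def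
    have hmems' : ∀ x ∈ s', x ∈ A' := fun x hx => hs'leA' hx
    set s₂ : Finset ↥A' := s'.attach.image (fun x => (⟨x.1, hmems' x.1 x.2⟩ : ↥A')) with hs₂def
    have hcard₂ : s₂.card ≤ n := by
      have h1 : s₂.card ≤ s'.attach.card := Finset.card_image_le
      rw [Finset.card_attach] at h1
      omega
    have hclo₂ : Subring.closure ((A₂ : Set ↥A') ∪ (s₂ : Set ↥A')) = ⊤ := by
      refine (Subring.eq_top_iff' _).2 ?_
      intro y
      set T := Subring.closure ((A₂ : Set ↥A') ∪ (s₂ : Set ↥A')) with hT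
      have hsub : (A : Set R) ∪ (s' : Set R) ⊆ ((T.map A'.subtype : Subring R) : Set R) := by
        rintro z (hz | hz)
        · exact ⟨⟨z, hAleA' hz⟩, Subring.subset_closure (Or.inl hz), rfl⟩
        · refine ⟨⟨z, hmems' z hz⟩, Subring.subset_closure (Or.inr ?_), rfl⟩
          exact Finset.mem_coe.2 (Finset.mem_image.2 ⟨⟨z, hz⟩, Finset.mem_attach _ _, rfl⟩)
      have hyA' : (y : R) ∈ Subring.closure ((A : Set R) ∪ (s' : Set R)) := by
        have h0 : (y : R) ∈ (A' : Set R) := y.2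
        rw [hA'eq] at h0
        exact h0
      have hmem2 : (y : R) ∈ T.map A'.subtype := Subring.closure_le.2 hsub hyA'
      obtain ⟨z, hzT, hz⟩ := Subring.mem_map.1 hmem2
      have : z = y := Subtype.coe_injective hz
      exact this ▸ hzT
    obtain ⟨a₂, ha₂ne, hIH⟩ := IH ↥A' inferInstance inferInstance A₂ s₂ hcard₂ hclo₂ a' ha'ne
    -- final element
    refine ⟨⟨(a₂ : ↥A').1, a₂.2⟩, ?_, fun σ hσ => ?_⟩
    · intro e
      apply ha₂ne
      have h0 : ((a₂ : ↥A') : R) = 0 := congrArg Subtype.val e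
      exact Subtype.coe_injective (Subtype.coe_injective h0)
    · -- build σ₂
      set j : ↥A₂ →+* ↥A :=
        { toFun := fun x => ⟨(x : ↥A').1, x.2⟩
          map_one' := rfl
          map_mul' := fun _ _ => rfl
          map_zero' := rfl
          map_add' := fun _ _ => rfl } with hj
      obtain ⟨φ', hφ'comp, hφ'a'⟩ := hIH (σ.comp j) hσ
      obtain ⟨φ, hφcomp, hφh⟩ := hstep φ' hφ'a'
      refine ⟨φ, ?_, hφh⟩
      ext x
      have h1 : (x : R) = A'.subtype ⟨(x : R), hAleA' x.2⟩ := rfl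
      have h2 : φ (A'.subtype ⟨(x : R), hAleA' x.2⟩) = φ' ⟨(x : R), hAleA' x.2⟩ :=
        congrFun (congrArg (fun g => g.toFun) hφcomp) _
      have h3 : (⟨(x : R), hAleA' x.2⟩ : ↥A') = A₂.subtype ⟨⟨(x : R), hAleA' x.2⟩, x.2⟩ := rfl
      have h4 : φ' (A₂.subtype ⟨⟨(x : R), hAleA' x.2⟩, x.2⟩) =
          (σ.comp j) ⟨⟨(x : R), hAleA' x.2⟩, x.2⟩ :=
        congrFun (congrArg (fun g => g.toFun) hφ'comp) _
      show φ (x : R) = σ x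
      rw [h1, h2, h3, h4]
      rfl



/-- **Nonvanishing of an element in the fibres.**
Let `k` be an algebraically closed field of characteristic zero, `B` a finitely generated
`k`-algebra that is an integral domain, and `f ∈ B[x]` a monic polynomial.  Let `R` be an
integral domain that is a finitely generated `B[x]_f`-algebra containing `B[x]_f`, and let
`h ∈ R` be nonzero.  Then there exists a nonzero `a ∈ B` such that for every `k`-algebra
homomorphism `c : B → k` with `c a ≠ 0`, the image `h ⊗ 1` of `h` in `R ⊗_{B[x]_f} k(x)` is
nonzero; here the tensor product is formed along the extension `σ : B[x]_f → k(x)` of `c`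
determined by `c(x) = x` (characterized by `σ ∘ (B[x] → B[x]_f) = (k[x] → k(x)) ∘ map c`). -/
theorem image_nonzero_on_zariski_open
    (k : Type*) [Field k] [IsAlgClosed k] [CharZero k]
    (B : Type*) [CommRing B] [IsDomain B] [Algebra k B] [Algebra.FiniteType k B]
    (f : Polynomial B) (hf : f.Monic)
    (R : Type*) [CommRing R] [IsDomain R] [Algebra (Localization.Away f) R]
    (hRinj : Function.Injective (algebraMap (Localization.Away f) R))
    [Algebra.FiniteType (Localization.Away f) R]
    (h : R) (hh : h ≠ 0) :
    ∃ a : B, a ≠ 0 ∧ ∀ c : B →ₐ[k] k, c a ≠ 0 →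
      ∀ σ : Localization.Away f →+* RatFunc k,
        σ.comp (algebraMap (Polynomial B) (Localization.Away f)) =
          (algebraMap (Polynomial k) (RatFunc k)).comp
            (Polynomial.mapRingHom (c : B →+* k)) →
        letI : Algebra (Localization.Away f) (RatFunc k) := σ.toAlgebra
        (h ⊗ₜ[Localization.Away f] (1 : RatFunc k) :
          TensorProduct (Localization.Away f) R (RatFunc k)) ≠ 0 := by
  classical
  set A := Localization.Away f with hAdef
  have hBnt : (1 : B) ≠ 0 := one_ne_zero
  have hfne : f ≠ 0 := hf.ne_zero
  have hle : Submonoid.powers f ≤ nonZeroDivisors (Polynomial B) :=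
    powers_le_nonZeroDivisors_of_noZeroDivisors hfne
  haveI : IsDomain A := IsLocalization.isDomain_localization hle
  have halginj : Function.Injective (algebraMap (Polynomial B) A) :=
    IsLocalization.injective A hle
  -- subring A₀ = range of A in R
  set A₀ : Subring R := (algebraMap A R).range with hA₀def
  have hrrsurj : Function.Surjective (algebraMap A R).rangeRestrict :=
    RingHom.rangeRestrict_surjective _
  have hrrinj : Function.Injective (algebraMap A R).rangeRestrict := by
    intro x y hxy
    exact hRinj (congrArg Subtype.val hxy)
  set e : A ≃+* ↥A₀ :=
    RingEquiv.ofBijective (algebraMap A R).rangeRestrict ⟨hrrinj, hrrsurj⟩ with hedef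
  -- generators
  obtain ⟨s, hs⟩ := ‹Algebra.FiniteType A R›.out
  have hclo : Subring.closure ((A₀ : Set R) ∪ (s : Set R)) = ⊤ := by
    refine (Subring.eq_top_iff' _).2 fun x => ?_
    have hx : x ∈ Algebra.adjoin A (s : Set R) := hs ▸ trivial
    let S' : Subalgebra A R :=
      { (Subring.closure ((A₀ : Set R) ∪ (s : Set R))).toSubsemiring with
        algebraMap_mem' := fun a => Subring.subset_closure (Or.inl ⟨a, rfl⟩) }
    exact Algebra.adjoin_le (S := S') (fun y hy => Subring.subset_closure (Or.inr hy)) hx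
  set L := AlgebraicClosure (RatFunc k) with hLdef
  obtain ⟨a₀, ha₀ne, hmain⟩ := main L s.card R inferInstance inferInstance A₀ s le_rfl hclo h hh
  -- pull a₀ back
  set a₁ : A := e.symm a₀ with ha₁def
  have ha₁ne : a₁ ≠ 0 := by
    intro e0
    apply ha₀ne
    rw [← (e.apply_symm_apply a₀), ← ha₁def, e0, map_zero]
  obtain ⟨⟨p, fm⟩, hp⟩ := IsLocalization.surj (Submonoid.powers f) a₁
  have hfmunit : IsUnit (algebraMap (Polynomial B) A fm) :=
    IsLocalization.map_units A fm
  have hpne : p ≠ 0 := by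
    intro e0
    rw [e0, map_zero] at hp
    exact hfmunit.ne_zero (by
      rcases mul_eq_zero.1 hp with h1 | h1
      · exact absurd h1 ha₁ne
      · exact h1)
  refine ⟨p.leadingCoeff, leadingCoeff_ne_zero.2 hpne, fun c hc σ hσ => ?_⟩
  intro htensor
  -- σ a₁ ≠ 0
  have hmapc : p.map (c : B →+* k) ≠ 0 := by
    intro e0
    apply hc
    have := congrArg (fun q => Polynomial.coeff q p.natDegree) e0
    simpa [Polynomial.coeff_map] using this
  have hσp : σ (algebraMap (Polynomial B) A p) =
      algebraMap (Polynomial k) (RatFunc k) (p.map (c : B →+* k)) := by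
    have := RingHom.congr_fun hσ p
    simpa using this
  have hσa₁ : σ a₁ ≠ 0 := by
    intro e0
    have h1 := congrArg σ hp
    rw [map_mul, e0, zero_mul, hσp] at h1
    exact hmapc (IsFractionRing.injective (Polynomial k) (RatFunc k)
      (by rw [← h1, map_zero]))
  -- σ₀ on A₀
  set ι : RatFunc k →+* L := algebraMap (RatFunc k) L with hιdef
  have hιinj : Function.Injective ι := ι.injective
  set σ₀ : ↥A₀ →+* L := ι.comp (σ.comp e.symm.toRingHom) with hσ₀def
  have hσ₀a₀ : σ₀ a₀ ≠ 0 := by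
    intro e0
    apply hσa₁
    apply hιinj
    rw [map_zero]
    exact e0
  obtain ⟨φ, hφcomp, hφh⟩ := hmain σ₀ hσ₀a₀
  -- algebra structures
  letI : Algebra A (RatFunc k) := σ.toAlgebra
  letI : Algebra A L := (ι.comp σ).toAlgebra
  have hφalg : ∀ x : A, φ (algebraMap A R x) = algebraMap A L x := by
    intro x
    have h1 : algebraMap A R x = A₀.subtype (e x) := rfl
    rw [h1]
    have h2 : φ (A₀.subtype (e x)) = σ₀ (e x) := RingHom.congr_fun hφcomp (e x)
    rw [h2, hσ₀def]
    simp only [RingHom.comp_apply, RingEquiv.toRingHom_eq_coe, RingHom.coe_coe]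
    rw [RingEquiv.symm_apply_apply]
    rfl
  set φA : R →ₐ[A] L := { φ with commutes' := hφalg } with hφAdef
  set ιA : RatFunc k →ₐ[A] L := { ι with commutes' := fun x => rfl } with hιAdef
  have := congrArg (Algebra.TensorProduct.productMap φA ιA) htensor
  rw [map_zero, Algebra.TensorProduct.productMap_apply_tmul, map_one, mul_one] at this
  exact hφh this
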